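/- The Hermite-type interpolation problem in the spline space of piecewise degree-(2s−1) polynomials on the partition t₀ < ... < t_M with C^{2s−d_i−1} smoothness at each interior knot t_i, which prescribes derivatives of orders 0, ..., s−1 at t₀ and t_M and derivatives of orders 0, ..., d_i−1 at each interior t_i (with 1 ≤ d_i ≤ s), has a unique solution for any prescribed data. -/

import Mathlib

open Polynomial

/-- Jump of the `j`-th derivative across interior knot `k` (pieces indexed by
`Fin (m+1)`, interior knots by `Fin m`, timestamps by `Fin (m+2)`). -/
noncomputable def knotJump (m : ℕ) (t : Fin (m + 2) → ℝ) (k : Fin m) (j : ℕ) :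
    (Fin (m + 1) → Polynomial ℝ) →ₗ[ℝ] ℝ :=
  ((Polynomial.leval (t k.succ.castSucc)).comp
      ((((Polynomial.derivative : Module.End ℝ (Polynomial ℝ)) ^ j :
          Module.End ℝ (Polynomial ℝ)) :
        Polynomial ℝ →ₗ[ℝ] Polynomial ℝ).comp
        (LinearMap.proj k.castSucc))) -
  ((Polynomial.leval (t k.succ.castSucc)).comp
      ((((Polynomial.derivative : Module.End ℝ (Polynomial ℝ)) ^ j :
          Module.End ℝ (Polynomial ℝ)) :
        Polynomial ℝ →ₗ[ℝ] Polynomial ℝ).comp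
        (LinearMap.proj k.succ)))

/-- Splines of piecewise degree `≤ 2s−1` that are `C^{2s−d_k−1}` across each
interior knot `k`. -/
noncomputable def splineSpace (s m : ℕ) (t : Fin (m + 2) → ℝ) (d : Fin m → ℕ) :
    Submodule ℝ (Fin (m + 1) → Polynomial ℝ) :=
  (⨅ i : Fin (m + 1),
    (Polynomial.degreeLE ℝ (2 * s - 1 : ℕ)).comap (LinearMap.proj i)) ⊓
  (⨅ k : Fin m, ⨅ j : Fin (2 * s - d k), LinearMap.ker (knotJump m t k j))


/-- If the s-th iterated derivative vanishes, the degree is < s. -/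
lemma auxSpline_degree_lt_of_iterate (s : ℕ) (p : Polynomial ℝ)
    (h : derivative^[s] p = 0) : p.degree < (s : ℕ) := by
  induction s generalizing p with
  | zero =>
    simp only [Function.iterate_zero, id_eq] at h
    simpa [h] using WithBot.bot_lt_coe 0
  | succ s ih =>
    have hd : (derivative p).degree < (s : ℕ) := by
      apply ih
      rw [← Function.iterate_succ_apply]
      exact h
    by_cases h0 : p.natDegree = 0
    · calc p.degree ≤ (p.natDegree : WithBot ℕ) := degree_le_natDegree
        _ < ((s+1 : ℕ) : WithBot ℕ) := by
            rw [h0]; exact_mod_cast Nat.succ_pos s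
    · have hpos : 0 < p.natDegree := Nat.pos_of_ne_zero h0
      have hder := degree_derivative_eq p hpos
      rw [hder] at hd
      have hp0 : p ≠ 0 := fun hh => by simp [hh] at h0
      rw [degree_eq_natDegree hp0]
      have : p.natDegree - 1 < s := by exact_mod_cast hd
      exact_mod_cast (by omega : p.natDegree < s + 1)

/-- A polynomial of degree < s whose derivatives of orders < s all vanish at a
point is zero. -/
lemma auxSpline_eq_zero_of_derivs (s : ℕ) (a : ℝ) (p : Polynomial ℝ)
    (hdeg : p.degree < (s : ℕ))
    (hev : ∀ j < s, (derivative^[j] p).eval a = 0) : p = 0 := by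
  by_cases hp0 : p = 0
  · exact hp0
  have hnat : p.natDegree < s := (natDegree_lt_iff_degree_lt hp0).2 hdeg
  apply taylor_injective a
  rw [map_zero]
  ext n
  rw [coeff_zero]
  by_cases hn : n < s
  · rw [taylor_coeff]
    have hh : ((Nat.factorial n : ℝ) • (hasseDeriv n p)).eval a
        = (derivative^[n] p).eval a := by
      rw [show ((Nat.factorial n : ℝ) • (hasseDeriv n p))
            = (Nat.factorial n • hasseDeriv n (R := ℝ)) p by
          simp [Nat.cast_smul_eq_nsmul]]
      rw [show ((Nat.factorial n • hasseDeriv n (R := ℝ)) p)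
            = derivative^[n] p from congrFun (factorial_smul_hasseDeriv n) p]
    rw [eval_smul, smul_eq_mul, hev n hn] at hh
    have hfact : (Nat.factorial n : ℝ) ≠ 0 := by
      exact_mod_cast Nat.factorial_ne_zero n
    exact (mul_eq_zero.1 hh).resolve_left hfact
  · have hlt : (taylor a p).natDegree < n := by
      rw [natDegree_taylor]; omega
    exact coeff_eq_zero_of_natDegree_lt hlt

/-- The "energy" polynomial whose derivative is `(P^{(s)})²`. -/
noncomputable def auxSplineF (s : ℕ) (P : Polynomial ℝ) : Polynomial ℝ :=
  ∑ j ∈ Finset.range s,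
    (-1 : Polynomial ℝ) ^ j * (derivative^[s + j] P) * (derivative^[s - 1 - j] P)

lemma auxSplineF_derivative (s : ℕ) (P : Polynomial ℝ)
    (hP : derivative^[2 * s] P = 0) :
    derivative (auxSplineF s P) = (derivative^[s] P) ^ 2 := by
  classical
  set G : ℕ → Polynomial ℝ := fun j =>
    (-1 : Polynomial ℝ) ^ j * (derivative^[s + j] P) * (derivative^[s - j] P)
    with hG
  have hterm : ∀ j ∈ Finset.range s,
      derivative ((-1 : Polynomial ℝ) ^ j * (derivative^[s + j] P)
        * (derivative^[s - 1 - j] P)) = G j - G (j + 1) := by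
    intro j hj
    rw [Finset.mem_range] at hj
    rw [derivative_mul, derivative_mul, derivative_pow]
    simp only [derivative_neg, derivative_one, neg_zero, mul_zero, zero_mul, add_zero, zero_add]
    have h1 : derivative (derivative^[s + j] P) = derivative^[s + (j + 1)] P := by
      rw [← Function.iterate_succ_apply' derivative (s + j) P]
      rfl
    have h2 : derivative (derivative^[s - 1 - j] P) = derivative^[s - j] P := by
      rw [← Function.iterate_succ_apply' derivative (s - 1 - j) P]
      congr 1
      omega
    have h3 : s - (j + 1) = s - 1 - j := by omega
    rw [h1, h2, hG]
    simp only [h3, pow_succ]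
    ring
  rw [auxSplineF, derivative_sum, Finset.sum_congr rfl hterm, Finset.sum_range_sub' G]
  have hGs : G s = 0 := by
    rw [hG]
    simp only [show s + s = 2 * s by omega, hP, mul_zero, zero_mul]
  rw [hGs, sub_zero, hG]
  simp only [pow_zero, one_mul, add_zero, Nat.sub_zero]
  ring

lemma auxSplineF_monotone (s : ℕ) (P : Polynomial ℝ)
    (hP : derivative^[2 * s] P = 0) :
    Monotone fun x => (auxSplineF s P).eval x := by
  apply monotone_of_deriv_nonneg
  · exact (auxSplineF s P).differentiable
  · intro x
    rw [Polynomial.deriv, auxSplineF_derivative s P hP]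
    rw [eval_pow]
    exact sq_nonneg _

lemma auxSpline_poly_zero (F : Polynomial ℝ) (a b : ℝ) (hab : a < b)
    (hmono : Monotone fun x => F.eval x) (ha : F.eval a = 0) (hb : F.eval b = 0) :
    F = 0 := by
  apply eq_zero_of_infinite_isRoot
  apply Set.Infinite.mono _ (Set.Ioo_infinite hab)
  intro x hx
  have h1 : F.eval a ≤ F.eval x := hmono (le_of_lt hx.1)
  have h2 : F.eval x ≤ F.eval b := hmono (le_of_lt hx.2)
  have : F.eval x = 0 := le_antisymm (hb ▸ h2) (ha ▸ h1)
  exact this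

lemma auxSplineF_eval_boundary (s : ℕ) (P : Polynomial ℝ) (a : ℝ)
    (h : ∀ j < s, (derivative^[j] P).eval a = 0) :
    (auxSplineF s P).eval a = 0 := by
  rw [auxSplineF, eval_finset_sum]
  apply Finset.sum_eq_zero
  intro j hj
  rw [Finset.mem_range] at hj
  rw [eval_mul, h (s - 1 - j) (by omega), mul_zero]

lemma auxSplineF_eval_knot (s dk : ℕ) (P Q : Polynomial ℝ) (τ : ℝ)
    (hd1 : 1 ≤ dk) (hds : dk ≤ s)
    (hcont : ∀ j < 2 * s - dk,
      (derivative^[j] P).eval τ = (derivative^[j] Q).eval τ)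
    (hzero : ∀ j < dk, (derivative^[j] P).eval τ = 0) :
    (auxSplineF s P).eval τ = (auxSplineF s Q).eval τ := by
  rw [auxSplineF, auxSplineF, eval_finset_sum, eval_finset_sum]
  apply Finset.sum_congr rfl
  intro j hj
  rw [Finset.mem_range] at hj
  by_cases hcase : j + dk < s
  · simp only [eval_mul]
    rw [hcont (s + j) (by omega), hcont (s - 1 - j) (by omega)]
  · have hz1 : (derivative^[s - 1 - j] P).eval τ = 0 := hzero _ (by omega)
    have hz2 : (derivative^[s - 1 - j] Q).eval τ = 0 :=
      (hcont (s - 1 - j) (by omega)).symm.trans hz1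
    simp only [eval_mul]
    rw [hz1, hz2, mul_zero, mul_zero]

lemma auxSpline_pieces_zero (s m : ℕ) (hs : 1 ≤ s) (t : Fin (m + 2) → ℝ)
    (hmono : StrictMono t) (d : Fin m → ℕ) (hd : ∀ k, 1 ≤ d k ∧ d k ≤ s)
    (p : Fin (m + 1) → Polynomial ℝ)
    (hdeg : ∀ i, (p i).degree < ((2 * s : ℕ) : WithBot ℕ))
    (hjump : ∀ k : Fin m, ∀ j < 2 * s - d k,
      (derivative^[j] (p k.castSucc)).eval (t k.succ.castSucc)
        = (derivative^[j] (p k.succ)).eval (t k.succ.castSucc))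
    (hb0 : ∀ j < s, (derivative^[j] (p 0)).eval (t 0) = 0)
    (hbf : ∀ j < s,
      (derivative^[j] (p (Fin.last m))).eval (t (Fin.last (m + 1))) = 0)
    (hqd : ∀ k : Fin m, ∀ j < d k,
      (derivative^[j] (p k.castSucc)).eval (t k.succ.castSucc) = 0) :
    ∀ i, p i = 0 := by
  have hP2s : ∀ i, derivative^[2 * s] (p i) = 0 := by
    intro i
    by_cases h0 : p i = 0
    · simp [h0]
    · exact iterate_derivative_eq_zero ((natDegree_lt_iff_degree_lt h0).2 (hdeg i))
  set F : Fin (m + 1) → Polynomial ℝ := fun i => auxSplineF s (p i) with hF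
  have hFmono : ∀ i, Monotone fun x => (F i).eval x :=
    fun i => auxSplineF_monotone s (p i) (hP2s i)
  have hknot : ∀ k : Fin m,
      (F k.castSucc).eval (t k.succ.castSucc)
        = (F k.succ).eval (t k.succ.castSucc) := by
    intro k
    exact auxSplineF_eval_knot s (d k) (p k.castSucc) (p k.succ) (t k.succ.castSucc)
      (hd k).1 (hd k).2 (fun j hj => hjump k j hj) (fun j hj => hqd k j hj)
  -- chain of inequalities
  have hA : ∀ i : Fin (m + 1), 0 ≤ (F i).eval (t i.castSucc) := by
    intro i
    induction i using Fin.induction with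
    | zero =>
      have : (F 0).eval (t 0) = 0 :=
        auxSplineF_eval_boundary s (p 0) (t 0) hb0
      rw [show ((0 : Fin (m+1)).castSucc) = (0 : Fin (m+2)) by rfl, this]
    | succ i ih =>
      have h1 : (F i.succ).eval (t i.succ.castSucc)
          = (F i.castSucc).eval (t i.succ.castSucc) := (hknot i).symm
      rw [h1]
      refine le_trans ih (hFmono i.castSucc ?_)
      apply le_of_lt
      apply hmono
      rw [← Fin.succ_castSucc]
      exact Fin.castSucc_lt_succ
  have hB : ∀ i : Fin (m + 1), (F i).eval (t i.succ) ≤ 0 := by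
    intro i
    induction i using Fin.reverseInduction with
    | last =>
      have : (F (Fin.last m)).eval (t (Fin.last m).succ) = 0 := by
        rw [Fin.succ_last]
        exact auxSplineF_eval_boundary s (p (Fin.last m)) (t (Fin.last (m+1))) hbf
      rw [this]
    | cast i ih =>
      rw [Fin.succ_castSucc, hknot i]
      refine le_trans (hFmono i.succ ?_) ih
      apply le_of_lt
      apply hmono
      exact Fin.castSucc_lt_succ
  have hzero : ∀ i : Fin (m + 1),
      (F i).eval (t i.castSucc) = 0 ∧ (F i).eval (t i.succ) = 0 := by
    intro i
    have h1 : (F i).eval (t i.castSucc) ≤ (F i).eval (t i.succ) :=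
      hFmono i (le_of_lt (hmono (Fin.castSucc_lt_succ (i := i))))
    constructor
    · exact le_antisymm (le_trans h1 (hB i)) (hA i)
    · exact le_antisymm (hB i) (le_trans (hA i) h1)
  have hds : ∀ i, (p i).degree < (s : ℕ) := by
    intro i
    have hFi : F i = 0 :=
      auxSpline_poly_zero (F i) (t i.castSucc) (t i.succ)
        (hmono (Fin.castSucc_lt_succ (i := i))) (hFmono i) (hzero i).1 (hzero i).2
    have hder : (derivative^[s] (p i)) ^ 2 = 0 := by
      rw [← auxSplineF_derivative s (p i) (hP2s i),
        show auxSplineF s (p i) = F i from rfl, hFi, map_zero]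
    exact auxSpline_degree_lt_of_iterate s (p i) (sq_eq_zero_iff.1 hder)
  intro i
  induction i using Fin.induction with
  | zero => exact auxSpline_eq_zero_of_derivs s (t 0) (p 0) (hds 0) hb0
  | succ i ih =>
    apply auxSpline_eq_zero_of_derivs s (t i.succ.castSucc) (p i.succ) (hds i.succ)
    intro j hj
    have hjlt : j < 2 * s - d i := by have := (hd i).2; omega
    have := hjump i j hjlt
    rw [ih] at this
    simp only [iterate_derivative_zero, eval_zero] at this
    exact this.symm


@[simp] lemma knotJump_apply (m : ℕ) (t : Fin (m + 2) → ℝ) (k : Fin m) (j : ℕ)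
    (p : Fin (m + 1) → Polynomial ℝ) :
    knotJump m t k j p
      = (derivative^[j] (p k.castSucc)).eval (t k.succ.castSucc)
        - (derivative^[j] (p k.succ)).eval (t k.succ.castSucc) := by
  simp [knotJump, Module.End.pow_apply]

/-- Evaluation of the `j`-th derivative at `x`, as a linear functional. -/
noncomputable def auxEvalDeriv (j : ℕ) (x : ℝ) : Polynomial ℝ →ₗ[ℝ] ℝ :=
  (Polynomial.leval x).comp
    ((((Polynomial.derivative : Module.End ℝ (Polynomial ℝ)) ^ j :
        Module.End ℝ (Polynomial ℝ)) : Polynomial ℝ →ₗ[ℝ] Polynomial ℝ))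

@[simp] lemma auxEvalDeriv_apply (j : ℕ) (x : ℝ) (p : Polynomial ℝ) :
    auxEvalDeriv j x p = (derivative^[j] p).eval x := by
  simp [auxEvalDeriv, Module.End.pow_apply]

/-- The Hermite-type interpolation problem in the spline space of
piecewise degree-`(2s−1)` polynomials with `C^{2s−d_k−1}` smoothness at interior
knots, prescribing derivatives of orders `0, …, s−1` at both endpoints and
derivatives of orders `0, …, d_k−1` at each interior knot (`1 ≤ d_k ≤ s`),
has a unique solution for any prescribed data. -/
theorem splineSpace_hermite_interpolation_unique
    (s m : ℕ) (hs : 1 ≤ s) (t : Fin (m + 2) → ℝ) (hmono : StrictMono t)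
    (d : Fin m → ℕ) (hd : ∀ k, 1 ≤ d k ∧ d k ≤ s)
    (b0 bf : Fin s → ℝ) (qd : (k : Fin m) → Fin (d k) → ℝ) :
    ∃! p : Fin (m + 1) → Polynomial ℝ,
      p ∈ splineSpace s m t d ∧
      (∀ j : Fin s,
        (Polynomial.derivative^[(j : ℕ)] (p 0)).eval (t 0) = b0 j) ∧
      (∀ j : Fin s,
        (Polynomial.derivative^[(j : ℕ)] (p (Fin.last m))).eval
          (t (Fin.last (m + 1))) = bf j) ∧
      (∀ k : Fin m, ∀ j : Fin (d k),
        (Polynomial.derivative^[(j : ℕ)] (p k.castSucc)).eval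
          (t k.succ.castSucc) = qd k j) := by

  classical
  -- the finite-dimensional domain and the data space
  haveI : Module.Finite ℝ (Polynomial.degreeLT ℝ (2 * s)) :=
    Module.Finite.equiv (Polynomial.degreeLTEquiv ℝ (2 * s)).symm
  let ι : (Fin (m + 1) → Polynomial.degreeLT ℝ (2 * s)) →ₗ[ℝ]
      (Fin (m + 1) → Polynomial ℝ) :=
    LinearMap.pi fun i => (Polynomial.degreeLT ℝ (2 * s)).subtype.comp (LinearMap.proj i)
  let Φ : (Fin (m + 1) → Polynomial ℝ) →ₗ[ℝ]
      (((k : Fin m) → Fin (2 * s - d k) → ℝ) ×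
        ((Fin s → ℝ) × (Fin s → ℝ) × ((k : Fin m) → Fin (d k) → ℝ))) :=
    LinearMap.prod
      (LinearMap.pi fun k : Fin m =>
        LinearMap.pi fun j : Fin (2 * s - d k) => knotJump m t k j)
      (LinearMap.prod
        (LinearMap.pi fun j : Fin s => (auxEvalDeriv j (t 0)).comp (LinearMap.proj 0))
        (LinearMap.prod
          (LinearMap.pi fun j : Fin s =>
            (auxEvalDeriv j (t (Fin.last (m + 1)))).comp (LinearMap.proj (Fin.last m)))
          (LinearMap.pi fun k : Fin m => LinearMap.pi fun j : Fin (d k) =>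
            (auxEvalDeriv j (t k.succ.castSucc)).comp (LinearMap.proj k.castSucc))))
  let Θ := Φ.comp ι
  have hΘ : ∀ q : Fin (m + 1) → Polynomial.degreeLT ℝ (2 * s),
      Θ q = (fun k => fun j : Fin (2 * s - d k) =>
              (derivative^[(j : ℕ)] ((q k.castSucc : Polynomial ℝ))).eval (t k.succ.castSucc)
                - (derivative^[(j : ℕ)] ((q k.succ : Polynomial ℝ))).eval (t k.succ.castSucc),
             (fun j : Fin s => (derivative^[(j : ℕ)] ((q 0 : Polynomial ℝ))).eval (t 0),
              fun j : Fin s =>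
                (derivative^[(j : ℕ)] ((q (Fin.last m) : Polynomial ℝ))).eval
                  (t (Fin.last (m + 1))),
              fun k => fun j : Fin (d k) =>
                (derivative^[(j : ℕ)] ((q k.castSucc : Polynomial ℝ))).eval
                  (t k.succ.castSucc))) := by
    intro q
    refine Prod.ext ?_ (Prod.ext ?_ (Prod.ext ?_ ?_)) <;>
      funext <;>
      simp [Θ, Φ, ι, Module.End.pow_apply]
  -- degreeLE (2s-1) = degreeLT (2s)
  have hLE : Polynomial.degreeLE ℝ ((2 * s - 1 : ℕ) : WithBot ℕ)
      = Polynomial.degreeLT ℝ (2 * s) := by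
    rw [← Polynomial.degreeLT_succ_eq_degreeLE]
    congr 1
    omega
  -- injectivity of Θ
  have hker : ∀ q, Θ q = 0 → q = 0 := by
    intro q hq
    rw [hΘ q] at hq
    rw [Prod.ext_iff] at hq
    obtain ⟨hq1, hq2⟩ := hq
    rw [Prod.ext_iff] at hq2
    obtain ⟨hq2, hq3⟩ := hq2
    rw [Prod.ext_iff] at hq3
    obtain ⟨hq3, hq4⟩ := hq3
    have hz : ∀ i, (q i : Polynomial ℝ) = 0 := by
      apply auxSpline_pieces_zero s m hs t hmono d hd
      · intro i
        exact Polynomial.mem_degreeLT.1 (q i).2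
      · intro k j hj
        have := congrFun (congrFun hq1 k) ⟨j, hj⟩
        simpa [sub_eq_zero] using this
      · intro j hj
        exact congrFun hq2 ⟨j, hj⟩
      · intro j hj
        exact congrFun hq3 ⟨j, hj⟩
      · intro k j hj
        exact congrFun (congrFun hq4 k) ⟨j, hj⟩
    funext i
    exact Subtype.ext (hz i)
  have hinj : Function.Injective Θ :=
    LinearMap.ker_eq_bot.1 (LinearMap.ker_eq_bot'.2 hker)
  -- dimension count
  have hfr : Module.finrank ℝ (Fin (m + 1) → Polynomial.degreeLT ℝ (2 * s))
      = Module.finrank ℝ (((k : Fin m) → Fin (2 * s - d k) → ℝ) ×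
          ((Fin s → ℝ) × (Fin s → ℝ) × ((k : Fin m) → Fin (d k) → ℝ))) := by
    have h1 : Module.finrank ℝ (Fin (m + 1) → Polynomial.degreeLT ℝ (2 * s))
        = (m + 1) * (2 * s) := by
      rw [Module.finrank_pi_fintype]
      have he : Module.finrank ℝ (Polynomial.degreeLT ℝ (2 * s)) = 2 * s := by
        rw [LinearEquiv.finrank_eq (Polynomial.degreeLTEquiv ℝ (2 * s)),
          Module.finrank_pi, Fintype.card_fin]
      simp [he, Finset.sum_const, mul_comm]
    have h2 : Module.finrank ℝ (((k : Fin m) → Fin (2 * s - d k) → ℝ) ×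
          ((Fin s → ℝ) × (Fin s → ℝ) × ((k : Fin m) → Fin (d k) → ℝ)))
        = (∑ k : Fin m, (2 * s - d k)) + (s + (s + ∑ k : Fin m, d k)) := by
      simp [Module.finrank_prod, Module.finrank_pi_fintype, Module.finrank_pi,
        Fintype.card_fin]
    rw [h1, h2]
    have h5 : (m + 1) * (2 * s) = m * (2 * s) + 2 * s := by ring
    have h3 : (∑ k : Fin m, (2 * s - d k)) + (∑ k : Fin m, d k)
        = ∑ k : Fin m, 2 * s := by
      rw [← Finset.sum_add_distrib]
      apply Finset.sum_congr rfl
      intro k _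
      have := (hd k).2
      omega
    have h4 : (∑ k : Fin m, 2 * s) = m * (2 * s) := by
      simp [Finset.sum_const, mul_comm]
    omega
  have hsurj : Function.Surjective Θ :=
    (LinearMap.injective_iff_surjective_of_finrank_eq_finrank hfr).1 hinj
  obtain ⟨q, hq⟩ := hsurj (0, b0, bf, qd)
  have hqq := hq
  rw [hΘ q] at hq
  rw [Prod.ext_iff] at hq
  obtain ⟨hq1, hq2⟩ := hq
  rw [Prod.ext_iff] at hq2
  obtain ⟨hq2, hq3⟩ := hq2
  rw [Prod.ext_iff] at hq3
  obtain ⟨hq3, hq4⟩ := hq3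
  refine ⟨fun i => (q i : Polynomial ℝ), ⟨?_, ?_, ?_, ?_⟩, ?_⟩
  · -- membership in the spline space
    rw [splineSpace, Submodule.mem_inf]
    constructor
    · rw [Submodule.mem_iInf]
      intro i
      rw [Submodule.mem_comap]
      show (q i : Polynomial ℝ) ∈ Polynomial.degreeLE ℝ ((2 * s - 1 : ℕ) : WithBot ℕ)
      rw [hLE]
      exact (q i).2
    · rw [Submodule.mem_iInf]
      intro k
      rw [Submodule.mem_iInf]
      intro j
      rw [LinearMap.mem_ker, knotJump_apply]
      have h := congrFun (congrFun hq1 k) j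
      simpa using h
  · intro j
    exact congrFun hq2 j
  · intro j
    exact congrFun hq3 j
  · intro k j
    exact congrFun (congrFun hq4 k) j
  · -- uniqueness
    rintro p' ⟨hmem, h1, h2, h3⟩
    rw [splineSpace, Submodule.mem_inf] at hmem
    obtain ⟨hmemdeg, hmemker⟩ := hmem
    rw [Submodule.mem_iInf] at hmemdeg
    have hmem' : ∀ i, p' i ∈ Polynomial.degreeLT ℝ (2 * s) := by
      intro i
      have := hmemdeg i
      rw [Submodule.mem_comap] at this
      rw [← hLE]
      exact this
    have hΘq' : Θ (fun i => (⟨p' i, hmem' i⟩ : Polynomial.degreeLT ℝ (2 * s)))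
        = (0, b0, bf, qd) := by
      rw [hΘ]
      refine Prod.ext ?_ (Prod.ext ?_ (Prod.ext ?_ ?_))
      · funext k j
        rw [Submodule.mem_iInf] at hmemker
        have hk := hmemker k
        rw [Submodule.mem_iInf] at hk
        have hkj := hk j
        rw [LinearMap.mem_ker, knotJump_apply] at hkj
        simpa [sub_eq_zero] using hkj
      · funext j
        exact h1 j
      · funext j
        exact h2 j
      · funext k j
        exact h3 k j
    have : (fun i => (⟨p' i, hmem' i⟩ : Polynomial.degreeLT ℝ (2 * s))) = q :=
      hinj (hΘq'.trans hqq.symm)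
    funext i
    exact congrArg Subtype.val (congrFun this i)
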